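/- Let n be a nonempty finite type, let Q : Matrix n n ℝ, and let π : n → ℝ be a probability vector (π i ≥ 0 for all i and ∑_i π i = 1) satisfying π ⬝ Q = 0 (row-vector–matrix product, i.e., ∑_i π i · Q i j = 0 for every j). Let y : n → ℝ with y i > 0 for all i, let V be the diagonal matrix with diagonal entries y, and set S = ∑_i y i · π i. Then S > 0, and the vector π* defined by π* i = y i · π i / S is a probability vector satisfying π* ⬝ (V⁻¹ * Q) = 0, where V⁻¹ * Q is the matrix with (i,j) entry Q i j / y i. -/

import Mathlib

/-- If `p` is a probability vector with `p ⬝ Q = 0` and `V = diagonal y` with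
`y i > 0`, then `S = ∑ i, y i * p i > 0` and `pstar i = y i * p i / S` is a
probability vector with `pstar ⬝ (V⁻¹ * Q) = 0`. -/
theorem stmt_4 {n : Type*} [Fintype n] [DecidableEq n] [Nonempty n]
    (Q : Matrix n n ℝ) (p : n → ℝ)
    (hpnn : ∀ i, 0 ≤ p i) (hpsum : ∑ i, p i = 1)
    (hpQ : ∀ j, ∑ i, p i * Q i j = 0)
    (y : n → ℝ) (hy : ∀ i, 0 < y i)
    (V : Matrix n n ℝ) (hV : V = Matrix.diagonal y)
    (S : ℝ) (hS : S = ∑ i, y i * p i)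
    (pstar : n → ℝ) (hpstar : ∀ i, pstar i = y i * p i / S) :
    0 < S ∧ (∀ i, 0 ≤ pstar i) ∧ (∑ i, pstar i = 1) ∧
    (∀ j, ∑ i, pstar i * (V⁻¹ * Q) i j = 0) := by
  have hSpos : 0 < S := by
    -- some p i > 0
    obtain ⟨i, hi⟩ : ∃ i, 0 < p i := by
      by_contra h
      push_neg at h
      have : ∀ i, p i = 0 := fun i => le_antisymm (h i) (hpnn i)
      simp [this] at hpsum
    rw [hS]
    have : 0 < y i * p i := mul_pos (hy i) hi
    calc 0 < y i * p i := this
      _ ≤ ∑ j, y j * p j := Finset.single_le_sum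
          (fun j _ => mul_nonneg (hy j).le (hpnn j)) (Finset.mem_univ i)
  have hVinv : V⁻¹ = Matrix.diagonal fun i => (y i)⁻¹ := by
    apply Matrix.inv_eq_left_inv
    rw [hV, Matrix.diagonal_mul_diagonal]
    convert Matrix.diagonal_one with i
    exact inv_mul_cancel₀ (hy i).ne'
  have hentry : ∀ i j, (V⁻¹ * Q) i j = (y i)⁻¹ * Q i j := by
    intro i j
    rw [hVinv, Matrix.diagonal_mul]
  refine ⟨hSpos, fun i => (hpstar i) ▸ div_nonneg (mul_nonneg (hy i).le (hpnn i)) hSpos.le, ?_, ?_⟩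
  · have : ∑ i, pstar i = (∑ i, y i * p i) / S := by
      rw [Finset.sum_div]
      exact Finset.sum_congr rfl fun i _ => (hpstar i)
    rw [this, ← hS, div_self hSpos.ne']
  · intro j
    have : ∀ i, pstar i * (V⁻¹ * Q) i j = (p i * Q i j) / S := by
      intro i
      rw [hpstar i, hentry i j]
      have h1 := (hy i).ne'
      have h2 := hSpos.ne'
      field_simp
    simp only [this, ← Finset.sum_div, hpQ j, zero_div]
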